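/- (Hughston–Jozsa–Wootters) Let u_1,…,u_s ∈ ℂ^n be pairwise orthogonal nonzero vectors and let v_1,…,v_r ∈ ℂ^n be vectors such that Σ_{i=1}^s u_i u_i^† = Σ_{j=1}^r v_j v_j^† as n×n matrices. Let U be the n×s matrix with columns u_1,…,u_s and V the n×r matrix with columns v_1,…,v_r. Then r ≥ s and there exists an s×r matrix Q with Q Q^† = I_{s×s} such that V = U Q. -/
import Mathlib
open Finset

noncomputable def hjwIP {n : ℕ} (x y : Fin n → ℂ) : ℂ := ∑ a, starRingEnd ℂ (x a) * y a

lemma hjwIP_conj {n : ℕ} (x y : Fin n → ℂ) :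
    starRingEnd ℂ (hjwIP x y) = hjwIP y x := by
  unfold hjwIP
  simp only [map_sum, map_mul, Complex.conj_conj]
  exact Finset.sum_congr rfl fun a _ => mul_comm _ _

lemma hjwIP_self {n : ℕ} (x : Fin n → ℂ) :
    hjwIP x x = ((∑ a, Complex.normSq (x a) : ℝ) : ℂ) := by
  unfold hjwIP
  push_cast
  exact Finset.sum_congr rfl fun a _ => (Complex.normSq_eq_conj_mul_self).symm

lemma hjwIP_self_ne {n : ℕ} (x : Fin n → ℂ) (hx : x ≠ 0) : hjwIP x x ≠ 0 := by
  rw [hjwIP_self, Ne, Complex.ofReal_eq_zero]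
  intro h
  apply hx
  funext a
  have := (Finset.sum_eq_zero_iff_of_nonneg
    (fun a _ => Complex.normSq_nonneg (x a))).mp h a (mem_univ a)
  simpa using Complex.normSq_eq_zero.mp this

lemma hjw_expand {n m : ℕ} (x y : Fin n → ℂ) (w : Fin m → Fin n → ℂ) :
    ∑ k, hjwIP x (w k) * starRingEnd ℂ (hjwIP y (w k))
      = ∑ a, ∑ b, starRingEnd ℂ (x a) * y b * (∑ k, w k a * starRingEnd ℂ (w k b)) := by
  unfold hjwIP
  calc ∑ k, (∑ a, starRingEnd ℂ (x a) * w k a) * starRingEnd ℂ (∑ b, starRingEnd ℂ (y b) * w k b)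
      = ∑ k, ∑ a, ∑ b, starRingEnd ℂ (x a) * y b * (w k a * starRingEnd ℂ (w k b)) := by
        refine Finset.sum_congr rfl fun k _ => ?_
        simp only [map_sum, map_mul, Complex.conj_conj, Finset.sum_mul_sum]
        exact Finset.sum_congr rfl fun a _ => Finset.sum_congr rfl fun b _ => by ring
    _ = ∑ a, ∑ k, ∑ b, starRingEnd ℂ (x a) * y b * (w k a * starRingEnd ℂ (w k b)) :=
        Finset.sum_comm
    _ = ∑ a, ∑ b, ∑ k, starRingEnd ℂ (x a) * y b * (w k a * starRingEnd ℂ (w k b)) :=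
        Finset.sum_congr rfl fun a _ => Finset.sum_comm
    _ = _ := by simp [Finset.mul_sum]

lemma hjw_expand2 {n s : ℕ} (u : Fin s → Fin n → ℂ) (x : Fin n → ℂ) (q : Fin s → ℂ) :
    hjwIP (fun a => x a - ∑ i, q i * u i a) (fun a => x a - ∑ i, q i * u i a)
      = hjwIP x x - ∑ i, q i * hjwIP x (u i)
        - ∑ i, starRingEnd ℂ (q i) * hjwIP (u i) x
        + ∑ i, ∑ k, starRingEnd ℂ (q i) * q k * hjwIP (u i) (u k) := by
  have e1 : ∀ a, starRingEnd ℂ (x a - ∑ i, q i * u i a) * (x a - ∑ i, q i * u i a)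
      = starRingEnd ℂ (x a) * x a
        - ∑ i, q i * (starRingEnd ℂ (x a) * u i a)
        - ∑ i, starRingEnd ℂ (q i) * (starRingEnd ℂ (u i a) * x a)
        + ∑ i, ∑ k, starRingEnd ℂ (q i) * q k * (starRingEnd ℂ (u i a) * u k a) := by
    intro a
    simp only [map_sub, map_sum, map_mul]
    have h2 : ∑ i, q i * (starRingEnd ℂ (x a) * u i a)
        = starRingEnd ℂ (x a) * ∑ i, q i * u i a := by
      rw [Finset.mul_sum]; exact sum_congr rfl fun i _ => by ring
    have h3 : ∑ i, starRingEnd ℂ (q i) * (starRingEnd ℂ (u i a) * x a)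
        = (∑ i, starRingEnd ℂ (q i) * starRingEnd ℂ (u i a)) * x a := by
      rw [Finset.sum_mul]; exact sum_congr rfl fun i _ => by ring
    have h4 : ∑ i, ∑ k, starRingEnd ℂ (q i) * q k * (starRingEnd ℂ (u i a) * u k a)
        = (∑ i, starRingEnd ℂ (q i) * starRingEnd ℂ (u i a)) * (∑ k, q k * u k a) := by
      rw [Finset.sum_mul_sum]
      exact sum_congr rfl fun i _ => sum_congr rfl fun k _ => by ring
    rw [h2, h3, h4]; ring
  unfold hjwIP
  simp only [e1]
  rw [Finset.sum_add_distrib, Finset.sum_sub_distrib, Finset.sum_sub_distrib]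
  congr 1
  · congr 1
    · congr 1
      rw [Finset.sum_comm]
      exact sum_congr rfl fun i _ => by rw [Finset.mul_sum]
    · rw [Finset.sum_comm]
      exact sum_congr rfl fun i _ => by rw [Finset.mul_sum]
  · rw [Finset.sum_comm]
    refine sum_congr rfl fun i _ => ?_
    rw [Finset.sum_comm]
    exact sum_congr rfl fun k _ => by rw [Finset.mul_sum]

theorem stmt_18 {n s r : ℕ}
    (u : Fin s → Fin n → ℂ) (v : Fin r → Fin n → ℂ)
    (hu0 : ∀ i, u i ≠ 0)
    (horth : ∀ i j, i ≠ j → (∑ a, starRingEnd ℂ (u i a) * u j a) = 0)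
    (hsum : ∀ a b, (∑ i, u i a * starRingEnd ℂ (u i b)) =
      ∑ j, v j a * starRingEnd ℂ (v j b)) :
    s ≤ r ∧ ∃ Q : Matrix (Fin s) (Fin r) ℂ,
      Q * Q.conjTranspose = 1 ∧
      Matrix.of (fun a j => v j a) = Matrix.of (fun a i => u i a) * Q := by
  set c : Fin s → ℂ := fun i => hjwIP (u i) (u i) with hc
  have hc0 : ∀ i, c i ≠ 0 := fun i => hjwIP_self_ne (u i) (hu0 i)
  have hcconj : ∀ i, starRingEnd ℂ (c i) = c i := fun i => by
    rw [hc]; exact hjwIP_conj _ _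
  have horth' : ∀ i j, i ≠ j → hjwIP (u i) (u j) = 0 := horth
  have huu : ∀ i k, hjwIP (u i) (u k) = if i = k then c i else 0 := by
    intro i k
    by_cases h : i = k
    · subst h; simp [hc]
    · simp [h, horth' i k h]
  have key : ∀ x y : Fin n → ℂ,
      ∑ j, hjwIP x (v j) * starRingEnd ℂ (hjwIP y (v j))
        = ∑ i, hjwIP x (u i) * starRingEnd ℂ (hjwIP y (u i)) := by
    intro x y
    rw [hjw_expand, hjw_expand]
    exact Finset.sum_congr rfl fun a _ => Finset.sum_congr rfl fun b _ => by rw [hsum a b]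
  have hD : ∀ k l, ∑ j, hjwIP (u k) (v j) * starRingEnd ℂ (hjwIP (u l) (v j))
      = if k = l then c k * c k else 0 := by
    intro k l
    rw [key]
    rw [Finset.sum_eq_single k]
    · rw [huu k k, if_pos rfl, hjwIP_conj]
      by_cases h : k = l
      · subst h; simp [hc]
      · rw [huu k l, if_neg h, if_neg h, mul_zero]
    · intro i _ hik
      rw [huu k i, if_neg fun hh => hik hh.symm, zero_mul]
    · intro h; exact absurd (mem_univ k) h
  -- the matrix Q
  set Q : Matrix (Fin s) (Fin r) ℂ := Matrix.of fun i j => hjwIP (u i) (v j) / c i with hQ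
  have hQentry : ∀ i j, Q i j = hjwIP (u i) (v j) / c i := fun i j => rfl
  have hQQ : Q * Q.conjTranspose = 1 := by
    ext k l
    rw [Matrix.mul_apply, Matrix.one_apply]
    have e : ∀ j, Q k j * Q.conjTranspose j l
        = hjwIP (u k) (v j) * starRingEnd ℂ (hjwIP (u l) (v j)) / (c k * c l) := by
      intro j
      rw [Matrix.conjTranspose_apply, hQentry, hQentry]
      rw [show (star (hjwIP (u l) (v j) / c l) : ℂ)
          = starRingEnd ℂ (hjwIP (u l) (v j)) / c l by
        rw [star_div₀]; rw [show (star (c l) : ℂ) = c l from hcconj l]; rfl]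
      rw [div_mul_div_comm]
    simp only [e]
    rw [← Finset.sum_div, hD k l]
    by_cases h : k = l
    · subst h
      rw [if_pos rfl, if_pos rfl, div_self (mul_ne_zero (hc0 k) (hc0 k))]
    · rw [if_neg h, if_neg h, zero_div]
  -- trace identity
  have htr : ∑ j, hjwIP (v j) (v j) = ∑ i, c i := by
    have h1 : ∑ j, hjwIP (v j) (v j) = ∑ a, ∑ j, v j a * starRingEnd ℂ (v j a) := by
      unfold hjwIP
      rw [Finset.sum_comm]
      exact sum_congr rfl fun a _ => sum_congr rfl fun j _ => mul_comm _ _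
    have h2 : ∑ i, c i = ∑ a, ∑ i, u i a * starRingEnd ℂ (u i a) := by
      simp only [hc]
      unfold hjwIP
      rw [Finset.sum_comm]
      exact sum_congr rfl fun a _ => sum_congr rfl fun i _ => mul_comm _ _
    rw [h1, h2]
    exact sum_congr rfl fun a _ => (hsum a a).symm
  -- the residual vectors
  set w : Fin r → Fin n → ℂ :=
    fun j a => v j a - ∑ i, (hjwIP (u i) (v j) / c i) * u i a with hw
  have hwip : ∀ j, hjwIP (w j) (w j)
      = hjwIP (v j) (v j)
        - ∑ i, hjwIP (u i) (v j) * starRingEnd ℂ (hjwIP (u i) (v j)) / c i := by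
    intro j
    have := hjw_expand2 u (v j) (fun i => hjwIP (u i) (v j) / c i)
    rw [show w j = fun a => v j a - ∑ i, (hjwIP (u i) (v j) / c i) * u i a from rfl]
    rw [this]
    have t2 : ∑ i, (hjwIP (u i) (v j) / c i) * hjwIP (v j) (u i)
        = ∑ i, hjwIP (u i) (v j) * starRingEnd ℂ (hjwIP (u i) (v j)) / c i := by
      refine sum_congr rfl fun i _ => ?_
      rw [← hjwIP_conj (u i) (v j)]
      ring
    have t3 : ∑ i, starRingEnd ℂ (hjwIP (u i) (v j) / c i) * hjwIP (u i) (v j)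
        = ∑ i, hjwIP (u i) (v j) * starRingEnd ℂ (hjwIP (u i) (v j)) / c i := by
      refine sum_congr rfl fun i _ => ?_
      rw [map_div₀, hcconj]
      ring
    have t4 : ∑ i, ∑ k, starRingEnd ℂ (hjwIP (u i) (v j) / c i)
          * (hjwIP (u k) (v j) / c k) * hjwIP (u i) (u k)
        = ∑ i, hjwIP (u i) (v j) * starRingEnd ℂ (hjwIP (u i) (v j)) / c i := by
      refine sum_congr rfl fun i _ => ?_
      rw [Finset.sum_eq_single i]
      · rw [huu i i, if_pos rfl, map_div₀, hcconj, div_mul_div_comm,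
          div_mul_eq_mul_div, mul_div_mul_right _ _ (hc0 i), mul_comm]
      · intro k _ hk
        rw [huu i k, if_neg fun hh => hk hh.symm, mul_zero]
      · intro h; exact absurd (mem_univ i) h
    rw [t2, t3, t4]
    ring
  have hsum0 : ∑ j, hjwIP (w j) (w j) = 0 := by
    simp only [hwip]
    rw [Finset.sum_sub_distrib, htr]
    have : ∑ j, ∑ i, hjwIP (u i) (v j) * starRingEnd ℂ (hjwIP (u i) (v j)) / c i
        = ∑ i, c i := by
      rw [Finset.sum_comm]
      refine sum_congr rfl fun i _ => ?_
      rw [← Finset.sum_div, hD i i, if_pos rfl, mul_div_assoc, div_self (hc0 i), mul_one]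
    rw [this, sub_self]
  have hw0 : ∀ j, w j = 0 := by
    have hreal : (((∑ j, ∑ a, Complex.normSq (w j a)) : ℝ) : ℂ) = 0 := by
      push_cast
      rw [← hsum0]
      exact (sum_congr rfl fun j _ => by rw [hjwIP_self]; push_cast; ring).symm
    rw [Complex.ofReal_eq_zero] at hreal
    intro j
    funext a
    have hj := (Finset.sum_eq_zero_iff_of_nonneg
      (fun j _ => Finset.sum_nonneg fun a _ => Complex.normSq_nonneg (w j a))).mp hreal j (mem_univ j)
    have ha := (Finset.sum_eq_zero_iff_of_nonneg
      (fun a _ => Complex.normSq_nonneg (w j a))).mp hj a (mem_univ a)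
    simpa using Complex.normSq_eq_zero.mp ha
  have hVU : Matrix.of (fun a j => v j a) = Matrix.of (fun a i => u i a) * Q := by
    ext a j
    rw [Matrix.mul_apply]
    have := congrFun (hw0 j) a
    simp only [hw, Pi.zero_apply] at this
    have hv : v j a = ∑ i, (hjwIP (u i) (v j) / c i) * u i a := by linear_combination this
    simp only [Matrix.of_apply]
    rw [hv]
    exact sum_congr rfl fun i _ => by rw [hQentry]; ring
  refine ⟨?_, Q, hQQ, hVU⟩
  have h1 : (Q * Q.conjTranspose).rank = s := by
    rw [hQQ, Matrix.rank_one, Fintype.card_fin]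
  have h2 : (Q * Q.conjTranspose).rank ≤ Q.rank := Matrix.rank_mul_le_left _ _
  have h3 : Q.rank ≤ r := by
    simpa using Matrix.rank_le_card_width Q
  omega
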